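/- In the formula language above extended with real constants r̄ for every r ∈ [0,1], every formula φ is semantically equivalent to a formula t(φ) containing only rational constants; i.e., there is a translation t such that for every valuation I, eval I φ = eval I (t φ). -/
import Mathlib


/-- Formulas of infinitary propositional Gödel logic with rational and real constants. -/
inductive Fml : Type
  | bot : Fml
  | var (n : ℕ) : Fml
  | imp (φ ψ : Fml) : Fml
  | and (φ ψ : Fml) : Fml
  | iInf (f : ℕ → Fml) : Fml
  | iSup (f : ℕ → Fml) : Fml
  | const (q : ℚ) (hq : 0 ≤ q ∧ q ≤ 1) : Fml
  | rconst (r : ℝ) (hr : 0 ≤ r ∧ r ≤ 1) : Fml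

/-- Extension of a valuation to all formulas, with Gödel semantics. -/
noncomputable def eval (I : ℕ → Set.Icc (0:ℝ) 1) : Fml → ℝ
  | .bot => 0
  | .var n => (I n : ℝ)
  | .imp φ ψ => if eval I φ ≤ eval I ψ then 1 else eval I ψ
  | .and φ ψ => min (eval I φ) (eval I ψ)
  | .iInf f => ⨅ i, eval I (f i)
  | .iSup f => ⨆ i, eval I (f i)
  | .const q _ => (q : ℝ)
  | .rconst r _ => r

/-- A formula contains only rational constants (no real-constant construct). -/
def RatOnly : Fml → Prop
  | .bot => True
  | .var _ => True
  | .imp φ ψ => RatOnly φ ∧ RatOnly ψ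
  | .and φ ψ => RatOnly φ ∧ RatOnly ψ
  | .iInf f => ∀ i, RatOnly (f i)
  | .iSup f => ∀ i, RatOnly (f i)
  | .const _ _ => True
  | .rconst _ _ => False

lemma exists_approx (r : ℝ) (hr : 0 ≤ r ∧ r ≤ 1) :
    ∃ f : ℕ → {q : ℚ // 0 ≤ q ∧ q ≤ 1}, (⨆ n, ((f n : ℚ) : ℝ)) = r := by
  obtain ⟨hr0, hr1⟩ := hr
  refine ⟨fun n => ⟨(⌊r * (n+1)⌋ : ℚ) / (n+1), ?_, ?_⟩, ?_⟩
  · apply div_nonneg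
    · exact_mod_cast Int.floor_nonneg.2 (by positivity)
    · positivity
  · rw [div_le_one (by positivity)]
    have h1 : (⌊r * (n+1)⌋ : ℝ) ≤ (n:ℝ) + 1 := by
      calc (⌊r * (n+1)⌋ : ℝ) ≤ r * (n+1) := Int.floor_le _
        _ ≤ 1 * (n+1) := by nlinarith [Nat.cast_nonneg (α := ℝ) n]
        _ = (n:ℝ) + 1 := by ring
    exact_mod_cast h1
  · have hval : ∀ n : ℕ, (((⌊r * (n+1)⌋ : ℚ) / (n+1) : ℚ) : ℝ)
        = (⌊r * (n+1)⌋ : ℝ) / ((n:ℝ) + 1) := by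
      intro n; push_cast; ring
    have hle : ∀ n : ℕ, (((⌊r * (n+1)⌋ : ℚ) / (n+1) : ℚ) : ℝ) ≤ r := by
      intro n
      rw [hval n, div_le_iff₀ (by positivity)]
      exact Int.floor_le _
    have hbdd : BddAbove (Set.range fun n : ℕ =>
        (((⌊r * (n+1)⌋ : ℚ) / (n+1) : ℚ) : ℝ)) := by
      refine ⟨r, ?_⟩
      rintro x ⟨n, rfl⟩
      exact hle n
    refine le_antisymm (ciSup_le hle) ?_
    by_contra h
    push_neg at h
    set S := ⨆ n : ℕ, (((⌊r * (n+1)⌋ : ℚ) / (n+1) : ℚ) : ℝ) with hS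
    obtain ⟨n, hn⟩ := exists_nat_gt (1 / (r - S))
    have hεpos : 0 < r - S := sub_pos.2 h
    have hn1 : 1 / ((n:ℝ) + 1) < r - S := by
      rw [div_lt_iff₀ (by positivity)]
      rw [div_lt_iff₀ hεpos] at hn
      nlinarith
    have hgt : r - 1 / ((n:ℝ) + 1) < (((⌊r * (n+1)⌋ : ℚ) / (n+1) : ℚ) : ℝ) := by
      rw [hval n, lt_div_iff₀ (by positivity)]
      have := Int.sub_one_lt_floor (r * (n+1))
      have hp : (0:ℝ) < (n:ℝ) + 1 := by positivity
      have hone : (1 / ((n:ℝ)+1)) * ((n:ℝ)+1) = 1 := by field_simp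
      nlinarith [hone]
    have hle' : (((⌊r * (n+1)⌋ : ℚ) / (n+1) : ℚ) : ℝ) ≤ S := le_ciSup hbdd n
    linarith

/-- Translation eliminating real constants. -/
noncomputable def trF : Fml → Fml
  | .bot => .bot
  | .var n => .var n
  | .imp φ ψ => .imp (trF φ) (trF ψ)
  | .and φ ψ => .and (trF φ) (trF ψ)
  | .iInf f => .iInf (fun i => trF (f i))
  | .iSup f => .iSup (fun i => trF (f i))
  | .const q hq => .const q hq
  | .rconst r hr => .iSup (fun n =>
      .const ((exists_approx r hr).choose n : ℚ) ((exists_approx r hr).choose n).2)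

lemma ratOnly_trans : ∀ φ, RatOnly (trF φ)
  | .bot => trivial
  | .var _ => trivial
  | .imp φ ψ => ⟨ratOnly_trans φ, ratOnly_trans ψ⟩
  | .and φ ψ => ⟨ratOnly_trans φ, ratOnly_trans ψ⟩
  | .iInf f => fun i => ratOnly_trans (f i)
  | .iSup f => fun i => ratOnly_trans (f i)
  | .const _ _ => trivial
  | .rconst _ _ => fun _ => trivial

lemma eval_trans (I : ℕ → Set.Icc (0:ℝ) 1) : ∀ φ, eval I φ = eval I (trF φ)
  | .bot => rfl
  | .var _ => rfl
  | .imp φ ψ => by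
      simp only [trF, eval, eval_trans I φ, eval_trans I ψ]
  | .and φ ψ => by
      simp only [trF, eval, eval_trans I φ, eval_trans I ψ]
  | .iInf f => by
      simp only [trF, eval]
      exact iInf_congr fun i => eval_trans I (f i)
  | .iSup f => by
      simp only [trF, eval]
      exact iSup_congr fun i => eval_trans I (f i)
  | .const _ _ => rfl
  | .rconst r hr => by
      simp only [trF, eval]
      exact ((exists_approx r hr).choose_spec).symm

theorem exists_translation_eliminating_real_constants :
    ∃ t : Fml → Fml, (∀ φ, RatOnly (t φ)) ∧
      ∀ (I : ℕ → Set.Icc (0:ℝ) 1) (φ : Fml), eval I φ = eval I (t φ) := by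
  exact ⟨trF, ratOnly_trans, eval_trans⟩
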